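/- Maximum principle for the logarithmic porous medium equation: if G is a locally finite connected weighted graph with H(x) = Δd(·,x₀)(x) ≤ C for some vertex x₀ and constant C ≥ 0, v₀ is a bounded positive function on V, and v(t,x) is a bounded positive solution of ∂_t v = Δ(log v) on [0,T) × V with v(0,·) = v₀, then sup_{x∈V} v(t,x) ≤ sup_{x∈V} v₀(x) for every t ∈ [0,T). -/

import Mathlib

open Finset Real

/-- Graph Laplacian `Δf(x) = (1/d x) * Σ_{y ∈ N x} μ x y * (f y - f x)`. -/
noncomputable def glap {V : Type*} (N : V → Finset V) (μ : V → V → ℝ) (d : V → ℝ)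
    (f : V → ℝ) (x : V) : ℝ :=
  (1 / d x) * ∑ y ∈ N x, μ x y * (f y - f x)

/-- Gradient norm squared `|∇f|²(x)`. -/
noncomputable def ggrad {V : Type*} (N : V → Finset V) (μ : V → V → ℝ) (d : V → ℝ)
    (f : V → ℝ) (x : V) : ℝ :=
  (1 / d x) * ∑ y ∈ N x, μ x y * (f y - f x) ^ 2

/-- Pointwise inner product `(∇f, ∇g)(x)`. -/
noncomputable def ginner {V : Type*} (N : V → Finset V) (μ : V → V → ℝ) (d : V → ℝ)
    (f g : V → ℝ) (x : V) : ℝ :=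
  (1 / d x) * ∑ y ∈ N x, μ x y * (f y - f x) * (g y - g x)

/-- Hessian norm squared `|D²f|²(x)`. -/
noncomputable def ghess {V : Type*} (N : V → Finset V) (μ : V → V → ℝ) (d : V → ℝ)
    (f : V → ℝ) (x : V) : ℝ :=
  (1 / d x) * ∑ y ∈ N x, (μ x y / d y) * ∑ z ∈ N y, μ y z * (f x - 2 * f y + f z) ^ 2

/-- Carré du champ `Γ(f,g)(x) = (1/2)[Δ(fg) - fΔg - gΔf](x)`. -/
noncomputable def ggamma {V : Type*} (N : V → Finset V) (μ : V → V → ℝ) (d : V → ℝ)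
    (f g : V → ℝ) (x : V) : ℝ :=
  (1 / 2) * (glap N μ d (fun y => f y * g y) x - f x * glap N μ d g x - g x * glap N μ d f x)

/-- Iterated carré du champ `Γ₂(f,f)(x) = (1/2)[ΔΓ(f,f) - 2Γ(f,Δf)](x)`. -/
noncomputable def ggamma2 {V : Type*} (N : V → Finset V) (μ : V → V → ℝ) (d : V → ℝ)
    (f : V → ℝ) (x : V) : ℝ :=
  (1 / 2) * (glap N μ d (ggamma N μ d f f) x - 2 * ggamma N μ d f (glap N μ d f) x)

lemma ball_fin {V : Type*} (G : SimpleGraph V) (hconn : G.Connected)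
    (N : V → Finset V) (hadj : ∀ x y, y ∈ N x ↔ G.Adj x y) (x₀ : V) :
    ∀ n : ℕ, {x : V | G.dist x x₀ ≤ n}.Finite := by
  intro n
  induction n with
  | zero =>
    refine (Set.finite_singleton x₀).subset fun x hx => ?_
    simp only [Set.mem_setOf_eq, Nat.le_zero] at hx
    exact hconn.dist_eq_zero_iff.mp hx
  | succ n ih =>
    have hsub : {x : V | G.dist x x₀ ≤ n + 1} ⊆
        {x : V | G.dist x x₀ ≤ n} ∪ ⋃ y ∈ {x : V | G.dist x x₀ ≤ n}, (N y : Set V) := by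
      intro x hx
      simp only [Set.mem_setOf_eq] at hx
      by_cases h0 : G.dist x x₀ ≤ n
      · exact Or.inl h0
      · right
        obtain ⟨p, hp⟩ := (hconn x x₀).exists_walk_length_eq_dist
        cases p with
        | nil => simp at hp; have := SimpleGraph.dist_self (G := G) (v := x₀); omega
        | @cons _ y _ hxy q =>
          have hql : q.length + 1 = G.dist x x₀ := by simpa using hp
          have hdy : G.dist y x₀ ≤ n := by
            have := SimpleGraph.dist_le q
            omega
          exact Set.mem_biUnion hdy ((hadj y x).mpr hxy.symm)
    exact (ih.union (ih.biUnion fun y _ => (N y).finite_toSet)).subset hsub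

/-- maximum principle for bounded positive solutions of the
logarithmic porous medium equation `∂ₜ v = Δ log v`. -/
theorem stmt13 {V : Type*} (G : SimpleGraph V) [DecidableRel G.Adj]
    (hinf : Infinite V) (hconn : G.Connected)
    (N : V → Finset V) (μ : V → V → ℝ) (d : V → ℝ)
    (hadj : ∀ x y, y ∈ N x ↔ G.Adj x y)
    (hsym : ∀ x y, μ x y = μ y x) (hnn : ∀ x y, 0 ≤ μ x y)
    (hd : ∀ x, d x = ∑ y ∈ N x, μ x y) (hdpos : ∀ x, 0 < d x)
    (x₀ : V) (C : ℝ) (hC : 0 ≤ C)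
    (hH : ∀ x, glap N μ d (fun y => (G.dist y x₀ : ℝ)) x ≤ C)
    (T : ℝ) (hT : 0 < T) (v : ℝ → V → ℝ)
    (hpos : ∀ t ∈ Set.Ico (0 : ℝ) T, ∀ x, 0 < v t x)
    (hbdd : ∃ M, ∀ t ∈ Set.Ico (0 : ℝ) T, ∀ x, v t x ≤ M)
    (hbelow : ∀ T', 0 ≤ T' → T' < T → ∃ ε > (0 : ℝ), ∀ t ∈ Set.Icc (0 : ℝ) T', ∀ x, ε ≤ v t x)
    (hheat : ∀ x, ∀ t ∈ Set.Ico (0 : ℝ) T,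
      HasDerivAt (fun s => v s x) (glap N μ d (fun y => Real.log (v t y)) x) t)
    (hcont : ∀ x, Continuous fun t => v t x)
    (M₀ : ℝ) (hM₀ : ∀ x, v 0 x ≤ M₀) :
    ∀ t ∈ Set.Ico (0 : ℝ) T, ∀ x, v t x ≤ M₀ := by
  by_contra hcon
  push_neg at hcon
  obtain ⟨t₁, ⟨ht₁0, ht₁T⟩, x₁, hx₁⟩ := hcon
  have hM₀pos : 0 < M₀ := lt_of_lt_of_le (hpos 0 ⟨le_refl 0, hT⟩ x₀) (hM₀ x₀)
  have ht₁pos : 0 < t₁ := by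
    rcases lt_or_eq_of_le ht₁0 with h | h
    · exact h
    · exact absurd hx₁ (not_lt.mpr (h ▸ hM₀ x₁))
  set A : ℝ := C / M₀ + 1 with hA
  have hApos : 0 < A := by positivity
  obtain ⟨M, hM⟩ := hbdd
  set M' : ℝ := max M (M₀ + 1) with hM'def
  have hM'₀ : M₀ < M' := lt_of_lt_of_le (by linarith) (le_max_right _ _)
  have hM' : ∀ t ∈ Set.Ico (0:ℝ) T, ∀ x, v t x ≤ M' :=
    fun t ht x => (hM t ht x).trans (le_max_left _ _)
  set D : V → ℝ := fun x => (G.dist x x₀ : ℝ) with hD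
  have hDnn : ∀ x, 0 ≤ D x := fun x => Nat.cast_nonneg _
  have hq : 0 < A * t₁ + D x₁ + 1 := by
    have := hDnn x₁; nlinarith
  set δ : ℝ := (v t₁ x₁ - M₀) / (2 * (A * t₁ + D x₁ + 1)) with hδ
  have hδpos : 0 < δ := by
    apply div_pos (by linarith); linarith
  set F : ℝ → V → ℝ := fun t x => v t x - δ * (A * t + D x) with hF
  clear_value A M' D δ F
  have hF₁ : M₀ < F t₁ x₁ := by
    have h1 : δ * (A * t₁ + D x₁ + 1) = (v t₁ x₁ - M₀) / 2 := by
      rw [hδ]; field_simp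
    have h2 : δ * (A * t₁ + D x₁) < δ * (A * t₁ + D x₁ + 1) := by nlinarith
    simp only [hF]; linarith
  -- membership helper
  have hIccIco : ∀ t ∈ Set.Icc (0:ℝ) t₁, t ∈ Set.Ico (0:ℝ) T :=
    fun t ht => ⟨ht.1, lt_of_le_of_lt ht.2 ht₁T⟩
  set n : ℕ := ⌈(M' - M₀) / δ⌉₊ with hn
  set B : Finset V := (ball_fin G hconn N hadj x₀ n).toFinset with hB
  have hmemB : ∀ x, x ∈ B ↔ G.dist x x₀ ≤ n := fun x => by
    simp [hB, Set.Finite.mem_toFinset]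
  have hfar : ∀ x, x ∉ B → ∀ t ∈ Set.Icc (0:ℝ) t₁, F t x < M₀ := by
    intro x hx t ht
    have hdist : (n : ℝ) < D x := by
      have h1 : ¬ G.dist x x₀ ≤ n := fun h => hx ((hmemB x).mpr h)
      simp only [hD]
      exact_mod_cast Nat.lt_of_not_le h1
    have h3 : (M' - M₀) / δ ≤ (n : ℝ) := Nat.le_ceil _
    have h4 : M' - M₀ ≤ δ * n := by
      rw [div_le_iff₀ hδpos] at h3; linarith [h3]
    have h5 : δ * (n:ℝ) < δ * D x := by
      exact mul_lt_mul_of_pos_left hdist hδpos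
    have h6 : v t x ≤ M' := hM' t (hIccIco t ht) x
    have h7 : 0 ≤ δ * (A * t) := by
      have := ht.1; positivity
    simp only [hF]; nlinarith
  -- max in time for each vertex
  have hmaxt : ∀ x : V, ∃ s ∈ Set.Icc (0:ℝ) t₁, ∀ r ∈ Set.Icc (0:ℝ) t₁, F r x ≤ F s x := by
    intro x
    have hcF : Continuous fun t => F t x := by
      rw [hF]
      apply (hcont x).sub
      exact continuous_const.mul ((continuous_const.mul continuous_id).add continuous_const)
    obtain ⟨s, hs, hmax⟩ := isCompact_Icc.exists_isMaxOn (Set.nonempty_Icc.mpr ht₁pos.le)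
      hcF.continuousOn
    exact ⟨s, hs, fun r hr => hmax hr⟩
  choose ts hts hmaxts using hmaxt
  have hx₁B : x₁ ∈ B := by
    by_contra h
    exact absurd hF₁ (not_lt.mpr (hfar x₁ h t₁ ⟨ht₁0, le_refl _⟩).le)
  obtain ⟨x', hx'B, hx'max⟩ := B.exists_max_image (fun x => F (ts x) x) ⟨x₁, hx₁B⟩
  set t' := ts x' with ht'def
  have ht'mem : t' ∈ Set.Icc (0:ℝ) t₁ := hts x'
  -- global max property
  have hFmax : ∀ y, ∀ r ∈ Set.Icc (0:ℝ) t₁, F r y ≤ F t' x' := by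
    intro y r hr
    by_cases hy : y ∈ B
    · exact (hmaxts y r hr).trans (hx'max y hy)
    · have h1 := hfar y hy r hr
      have h2 : F t₁ x₁ ≤ F t' x' :=
        (hmaxts x₁ t₁ ⟨ht₁0, le_refl _⟩).trans (hx'max x₁ hx₁B)
      linarith
  have hFt' : M₀ < F t' x' := lt_of_lt_of_le hF₁ (hFmax x₁ t₁ ⟨ht₁0, le_refl _⟩)
  have ht'pos : 0 < t' := by
    rcases lt_or_eq_of_le ht'mem.1 with h | h
    · exact h
    · exfalso
      have h1 : F 0 x' ≤ M₀ := by
        simp only [hF]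
        have := hDnn x'
        have := hM₀ x'
        nlinarith
      rw [← h] at hFt'; linarith
  have ht'T : t' < T := lt_of_le_of_lt ht'mem.2 ht₁T
  have ht'Ico : t' ∈ Set.Ico (0:ℝ) T := ⟨ht'mem.1, ht'T⟩
  set L : ℝ := glap N μ d (fun y => Real.log (v t' y)) x' with hL₀
  have hL : L = glap N μ d (fun y => Real.log (v t' y)) x' := hL₀
  have hvx' : M₀ < v t' x' := by
    have h1 : 0 ≤ δ * (A * t' + D x') := by
      have := hDnn x'; have := ht'mem.1; positivity
    simp only [hF] at hFt'; linarith
  -- derivative of F at t' is L - δ * A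
  clear_value L
  have hder : HasDerivAt (fun s => F s x') (L - δ * A) t' := by
    have h0 := (hheat x' t' ht'Ico).sub
      ((((hasDerivAt_id t').const_mul A).add_const (D x')).const_mul δ)
    rw [hL₀]
    rw [hF]; rw [mul_one] at h0; exact h0
  -- derivative nonneg at max
  have hge : 0 ≤ L - δ * A := by
    have hslope := hasDerivAt_iff_tendsto_slope.mp hder
    have h1 : Filter.Tendsto (slope (fun s => F s x') t') (nhdsWithin t' (Set.Iio t'))
        (nhds (L - δ * A)) :=
      hslope.mono_left (nhdsWithin_mono _ fun s hs => ne_of_lt hs)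
    refine ge_of_tendsto h1 ?_
    filter_upwards [Ioo_mem_nhdsLT_of_mem (Set.mem_Ioc.mpr ⟨ht'pos, le_refl t'⟩)] with s hs
    rw [slope_def_field, div_nonneg_iff]
    right
    constructor
    · have : F s x' ≤ F t' x' := hFmax x' s ⟨hs.1.le, hs.2.le.trans ht'mem.2⟩
      linarith
    · linarith [hs.2]
  -- bound L
  have hLle : L ≤ δ / M₀ * C := by
    have hdx : 0 < d x' := hdpos x'
    have hvpos : ∀ y, 0 < v t' y := hpos t' ht'Ico
    have hterm : ∀ y ∈ N x', μ x' y * (Real.log (v t' y) - Real.log (v t' x')) ≤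
        μ x' y * (δ / v t' x' * (D y - D x')) := by
      intro y _
      apply mul_le_mul_of_nonneg_left _ (hnn x' y)
      have h1 : Real.log (v t' y) - Real.log (v t' x') ≤ (v t' y - v t' x') / v t' x' := by
        rw [← Real.log_div (ne_of_gt (hvpos y)) (ne_of_gt (hvpos x'))]
        have h2 := Real.log_le_sub_one_of_pos (div_pos (hvpos y) (hvpos x'))
        have h3 : v t' y / v t' x' - 1 = (v t' y - v t' x') / v t' x' := by
          rw [sub_div, div_self (ne_of_gt (hvpos x'))]
        linarith
      have h4 : v t' y - v t' x' ≤ δ * (D y - D x') := by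
        have := hFmax y t' ht'mem
        simp only [hF] at this
        nlinarith
      have h5 : (v t' y - v t' x') / v t' x' ≤ δ * (D y - D x') / v t' x' := by
        gcongr
        exact (hvpos x').le
      calc Real.log (v t' y) - Real.log (v t' x') ≤ (v t' y - v t' x') / v t' x' := h1
        _ ≤ δ * (D y - D x') / v t' x' := h5
        _ = δ / v t' x' * (D y - D x') := by ring
    have hsum : ∑ y ∈ N x', μ x' y * (Real.log (v t' y) - Real.log (v t' x')) ≤
        ∑ y ∈ N x', μ x' y * (δ / v t' x' * (D y - D x')) := Finset.sum_le_sum hterm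
    have heq : ∑ y ∈ N x', μ x' y * (δ / v t' x' * (D y - D x')) =
        (δ / v t' x') * ∑ y ∈ N x', μ x' y * (D y - D x') := by
      rw [Finset.mul_sum]; apply Finset.sum_congr rfl; intros; ring
    have hL1 : L ≤ (δ / v t' x') * glap N μ d D x' := by
      simp only [hL, glap]
      calc (1 / d x') * ∑ y ∈ N x', μ x' y * (Real.log (v t' y) - Real.log (v t' x'))
          ≤ (1 / d x') * ∑ y ∈ N x', μ x' y * (δ / v t' x' * (D y - D x')) := by
            apply mul_le_mul_of_nonneg_left hsum; positivity
        _ = (δ / v t' x') * ((1 / d x') * ∑ y ∈ N x', μ x' y * (D y - D x')) := by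
            rw [heq]; ring
    have hglapC : glap N μ d D x' ≤ C := hH x'
    have hfrac : 0 < δ / v t' x' := div_pos hδpos (hvpos x')
    have hL2 : (δ / v t' x') * glap N μ d D x' ≤ (δ / v t' x') * C :=
      mul_le_mul_of_nonneg_left hglapC hfrac.le
    have hL3 : δ / v t' x' ≤ δ / M₀ :=
      div_le_div_of_nonneg_left hδpos.le hM₀pos hvx'.le
    have hL4 : (δ / v t' x') * C ≤ (δ / M₀) * C :=
      mul_le_mul_of_nonneg_right hL3 hC
    linarith
  -- contradiction
  have hAeq : δ * A = δ / M₀ * C + δ := by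
    rw [hA]; field_simp
  linarith [hge, hLle, hδpos, hAeq]
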